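/- Dempster's rule of combination is associative: if m1, m2, m3 are BBAs on a finite nonempty frame Θ such that c(m1,m2) < 1, c(m1⊕m2, m3) < 1, c(m2,m3) < 1, and c(m1, m2⊕m3) < 1, then (m1 ⊕ m2) ⊕ m3 = m1 ⊕ (m2 ⊕ m3). -/

import Mathlib

open Finset

/-- A basic belief assignment (BBA) on a finite nonempty frame `Θ`. -/
def IsBBA {Θ : Type*} [Fintype Θ] [DecidableEq Θ] (m : Finset Θ → ℝ) : Prop :=
  m ∅ = 0 ∧ (∀ A, 0 ≤ m A) ∧ ∑ A : Finset Θ, m A = 1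

/-- Shafer's reliability discounting of `m` by the reliability factor `α`. -/
def rdiscount {Θ : Type*} [Fintype Θ] [DecidableEq Θ] (α : ℝ) (m : Finset Θ → ℝ) :
    Finset Θ → ℝ :=
  fun A => if A = Finset.univ then α * m A + (1 - α) else α * m A

/-- The conflict between two mass functions. -/
def conflict {Θ : Type*} [Fintype Θ] [DecidableEq Θ] (m1 m2 : Finset Θ → ℝ) : ℝ :=
  ∑ B : Finset Θ, ∑ C : Finset Θ, if B ∩ C = ∅ then m1 B * m2 C else 0

/-- Dempster's rule of combination. -/
noncomputable def dempster {Θ : Type*} [Fintype Θ] [DecidableEq Θ] (m1 m2 : Finset Θ → ℝ) :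
    Finset Θ → ℝ :=
  fun A => if A = ∅ then 0
    else (∑ B : Finset Θ, ∑ C : Finset Θ, if B ∩ C = A then m1 B * m2 C else 0) /
      (1 - conflict m1 m2)

/-- Iterated Dempster combination of `d 0, …, d i`. -/
noncomputable def combUpTo {Θ : Type*} [Fintype Θ] [DecidableEq Θ] (d : ℕ → Finset Θ → ℝ) :
    ℕ → Finset Θ → ℝ
  | 0 => d 0
  | i + 1 => dempster (combUpTo d (i)) (d (i + 1))

/-- The assessment BBA on the frame `{H_1,…,H_N}` determined by belief degrees `β`. -/
def assessBBA {N : ℕ} (β : Fin N → ℝ) : Finset (Fin N) → ℝ :=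
  fun A => if A = Finset.univ then 1 - ∑ n, β n
    else ∑ n : Fin N, if A = {n} then β n else 0

/-- An importance basic belief assignment (IBBA): `ω` is the mass on the
indecisiveness element `Ω`. -/
def IsIBBA {Θ : Type*} [Fintype Θ] [DecidableEq Θ] (m : Finset Θ → ℝ) (ω : ℝ) : Prop :=
  m ∅ = 0 ∧ (∀ A, 0 ≤ m A) ∧ 0 ≤ ω ∧ (∑ A : Finset Θ, m A) + ω = 1

/-- Importance discounting of a BBA `m` by the importance factor `β`. -/
def impDiscount {Θ : Type*} [Fintype Θ] [DecidableEq Θ] (β : ℝ) (m : Finset Θ → ℝ) :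
    (Finset Θ → ℝ) × ℝ :=
  (fun A => β * m A, 1 - β)

/-- The extended Dempster rule of combination of two IBBAs. -/
noncomputable def edComb {Θ : Type*} [Fintype Θ] [DecidableEq Θ]
    (p q : (Finset Θ → ℝ) × ℝ) : (Finset Θ → ℝ) × ℝ :=
  (fun A => if A = ∅ then 0
      else (1 - conflict p.1 q.1)⁻¹ *
        ((∑ B : Finset Θ, ∑ C : Finset Θ, if B ∩ C = A then p.1 B * q.1 C else 0) +
          p.1 A * q.2 + p.2 * q.1 A),
    (1 - conflict p.1 q.1)⁻¹ * (p.2 * q.2))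

/-- Iterated extended Dempster combination of `d 0, …, d i`. -/
noncomputable def edCombUpTo {Θ : Type*} [Fintype Θ] [DecidableEq Θ] (d : ℕ → (Finset Θ → ℝ) × ℝ) :
    ℕ → (Finset Θ → ℝ) × ℝ
  | 0 => d 0
  | i + 1 => edComb (edCombUpTo d i) (d (i + 1))

/-- The singleton conflict `Σ_{j≠p} m1({H_j})·m2({H_p})`. -/
def singConflict {N : ℕ} (m1 m2 : Finset (Fin N) → ℝ) : ℝ :=
  ∑ j : Fin N, ∑ p : Fin N, if j ≠ p then m1 {j} * m2 {p} else 0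

/-- One recursive aggregation step of the original ER algorithm. -/
noncomputable def erStep {N : ℕ} (s : (Fin N → ℝ) × ℝ) (b : Fin N → ℝ) (h : ℝ) : (Fin N → ℝ) × ℝ :=
  (fun n => (1 - ∑ j : Fin N, ∑ p : Fin N, if p ≠ j then s.1 j * b p else 0)⁻¹ *
      (s.1 n * b n + s.1 n * h + s.2 * b n),
   (1 - ∑ j : Fin N, ∑ p : Fin N, if p ≠ j then s.1 j * b p else 0)⁻¹ * (s.2 * h))

/-- The recursively defined masses of the original ER algorithm. -/
noncomputable def erSeq {N : ℕ} (b : ℕ → Fin N → ℝ) (h : ℕ → ℝ) : ℕ → (Fin N → ℝ) × ℝ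
  | 0 => (b 0, h 0)
  | i + 1 => erStep (erSeq b h i) (b (i + 1)) (h (i + 1))

/-- One recursive aggregation step of the modified ER algorithm, on triples
`(masses on singletons, m̃_H, m̄_H)`. -/
noncomputable def merStep {N : ℕ} (s : (Fin N → ℝ) × ℝ × ℝ) (b : Fin N → ℝ) (tld brd : ℝ) :
    (Fin N → ℝ) × ℝ × ℝ :=
  (fun n => (1 - ∑ j : Fin N, ∑ p : Fin N, if p ≠ j then s.1 j * b p else 0)⁻¹ *
      (s.1 n * b n + s.1 n * (brd + tld) + (s.2.2 + s.2.1) * b n),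
   (1 - ∑ j : Fin N, ∑ p : Fin N, if p ≠ j then s.1 j * b p else 0)⁻¹ *
      (s.2.1 * tld + s.2.1 * brd + s.2.2 * tld),
   (1 - ∑ j : Fin N, ∑ p : Fin N, if p ≠ j then s.1 j * b p else 0)⁻¹ * (s.2.2 * brd))

/-- The recursively defined masses of the modified ER algorithm. -/
noncomputable def merSeq {N : ℕ} (b : ℕ → Fin N → ℝ) (tld brd : ℕ → ℝ) : ℕ → (Fin N → ℝ) × ℝ × ℝ
  | 0 => (b 0, tld 0, brd 0)
  | i + 1 => merStep (merSeq b tld brd i) (b (i + 1)) (tld (i + 1)) (brd (i + 1))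

/-- Reliability-importance discounting: the mass-function part `m^{α,β}`. -/
def riDiscount {Θ : Type*} [Fintype Θ] [DecidableEq Θ] (α β : ℝ) (m : Finset Θ → ℝ) :
    Finset Θ → ℝ :=
  fun A => if A = Finset.univ then α * β * m A + (1 - α) * β else α * β * m A


section DempsterAssocHelpers

variable {Θ : Type*} [Fintype Θ] [DecidableEq Θ]

/-- The unnormalized triple combination. -/
def tripleSum (m1 m2 m3 : Finset Θ → ℝ) (A : Finset Θ) : ℝ :=
  ∑ X : Finset Θ, ∑ Y : Finset Θ, ∑ Z : Finset Θ,
    if (X ∩ Y) ∩ Z = A then m1 X * m2 Y * m3 Z else 0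

lemma dempster_key1 (m1 m2 m3 : Finset Θ → ℝ) (A : Finset Θ) :
    (∑ B : Finset Θ, ∑ C : Finset Θ, if B ∩ C = A then
      (∑ X : Finset Θ, ∑ Y : Finset Θ, if X ∩ Y = B then m1 X * m2 Y else 0) * m3 C else 0)
    = tripleSum m1 m2 m3 A := by
  have h : ∀ B C : Finset Θ, (if B ∩ C = A then
      (∑ X : Finset Θ, ∑ Y : Finset Θ, if X ∩ Y = B then m1 X * m2 Y else 0) * m3 C else 0)
      = ∑ X : Finset Θ, ∑ Y : Finset Θ,
          if X ∩ Y = B then (if B ∩ C = A then m1 X * m2 Y * m3 C else 0) else 0 := by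
    intro B C
    split_ifs with hBC
    · rw [Finset.sum_mul]
      refine Finset.sum_congr rfl fun X _ => ?_
      rw [Finset.sum_mul]
      refine Finset.sum_congr rfl fun Y _ => ?_
      split_ifs <;> simp [hBC]
    · simp [hBC]
  simp_rw [h]
  rw [Finset.sum_comm]
  have step : ∀ C : Finset Θ, (∑ B : Finset Θ, ∑ X : Finset Θ, ∑ Y : Finset Θ,
      if X ∩ Y = B then (if B ∩ C = A then m1 X * m2 Y * m3 C else 0) else 0)
      = ∑ X : Finset Θ, ∑ Y : Finset Θ,
          if (X ∩ Y) ∩ C = A then m1 X * m2 Y * m3 C else 0 := by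
    intro C
    rw [Finset.sum_comm]
    refine Finset.sum_congr rfl fun X _ => ?_
    rw [Finset.sum_comm]
    refine Finset.sum_congr rfl fun Y _ => ?_
    simp [Finset.sum_ite_eq]
  simp_rw [step]
  rw [tripleSum, Finset.sum_comm]
  exact Finset.sum_congr rfl fun X _ => Finset.sum_comm

lemma dempster_key2 (m1 m2 m3 : Finset Θ → ℝ) (A : Finset Θ) :
    (∑ B : Finset Θ, ∑ C : Finset Θ, if B ∩ C = A then
      m1 B * (∑ Y : Finset Θ, ∑ Z : Finset Θ, if Y ∩ Z = C then m2 Y * m3 Z else 0) else 0)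
    = tripleSum m1 m2 m3 A := by
  have h : ∀ B C : Finset Θ, (if B ∩ C = A then
      m1 B * (∑ Y : Finset Θ, ∑ Z : Finset Θ, if Y ∩ Z = C then m2 Y * m3 Z else 0) else 0)
      = ∑ Y : Finset Θ, ∑ Z : Finset Θ,
          if Y ∩ Z = C then (if B ∩ C = A then m1 B * (m2 Y * m3 Z) else 0) else 0 := by
    intro B C
    split_ifs with hBC
    · rw [Finset.mul_sum]
      refine Finset.sum_congr rfl fun Y _ => ?_
      rw [Finset.mul_sum]
      refine Finset.sum_congr rfl fun Z _ => ?_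
      split_ifs <;> simp [hBC]
    · simp [hBC]
  simp_rw [h]
  rw [tripleSum]
  refine Finset.sum_congr rfl fun B _ => ?_
  have step : ∀ Y : Finset Θ, (∑ C : Finset Θ, ∑ Z : Finset Θ,
      if Y ∩ Z = C then (if B ∩ C = A then m1 B * (m2 Y * m3 Z) else 0) else 0)
      = ∑ Z : Finset Θ, if B ∩ (Y ∩ Z) = A then m1 B * (m2 Y * m3 Z) else 0 := by
    intro Y
    rw [Finset.sum_comm]
    refine Finset.sum_congr rfl fun Z _ => ?_
    simp [Finset.sum_ite_eq]
  rw [Finset.sum_comm]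
  simp_rw [step]
  refine Finset.sum_congr rfl fun Y _ => Finset.sum_congr rfl fun Z _ => ?_
  rw [Finset.inter_assoc, mul_assoc]

lemma dempster_sumdiv1 (m1 m2 m3 : Finset Θ → ℝ) (A : Finset Θ) (K : ℝ) :
    (∑ B : Finset Θ, ∑ C : Finset Θ, if B ∩ C = A then
      ((∑ X : Finset Θ, ∑ Y : Finset Θ, if X ∩ Y = B then m1 X * m2 Y else 0) * m3 C) / K else 0)
    = tripleSum m1 m2 m3 A / K := by
  have h : ∀ B C : Finset Θ, (if B ∩ C = A then
      ((∑ X : Finset Θ, ∑ Y : Finset Θ, if X ∩ Y = B then m1 X * m2 Y else 0) * m3 C) / K else 0)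
      = (if B ∩ C = A then
          (∑ X : Finset Θ, ∑ Y : Finset Θ, if X ∩ Y = B then m1 X * m2 Y else 0) * m3 C else 0)
        / K := fun B C => by split_ifs <;> simp
  simp_rw [h, ← Finset.sum_div, dempster_key1]

lemma dempster_sumdiv2 (m1 m2 m3 : Finset Θ → ℝ) (A : Finset Θ) (K : ℝ) :
    (∑ B : Finset Θ, ∑ C : Finset Θ, if B ∩ C = A then
      (m1 B * (∑ Y : Finset Θ, ∑ Z : Finset Θ, if Y ∩ Z = C then m2 Y * m3 Z else 0)) / K else 0)
    = tripleSum m1 m2 m3 A / K := by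
  have h : ∀ B C : Finset Θ, (if B ∩ C = A then
      (m1 B * (∑ Y : Finset Θ, ∑ Z : Finset Θ, if Y ∩ Z = C then m2 Y * m3 Z else 0)) / K else 0)
      = (if B ∩ C = A then
          m1 B * (∑ Y : Finset Θ, ∑ Z : Finset Θ, if Y ∩ Z = C then m2 Y * m3 Z else 0) else 0)
        / K := fun B C => by split_ifs <;> simp
  simp_rw [h, ← Finset.sum_div, dempster_key2]

end DempsterAssocHelpers

/-- Dempster's rule of combination is associative. -/
theorem dempster_assoc {Θ : Type*} [Fintype Θ] [DecidableEq Θ] [Nonempty Θ]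
    (m1 m2 m3 : Finset Θ → ℝ) (h1 : IsBBA m1) (h2 : IsBBA m2) (h3 : IsBBA m3)
    (hc12 : conflict m1 m2 < 1) (hc12_3 : conflict (dempster m1 m2) m3 < 1)
    (hc23 : conflict m2 m3 < 1) (hc1_23 : conflict m1 (dempster m2 m3) < 1) :
    dempster (dempster m1 m2) m3 = dempster m1 (dempster m2 m3) := by
  have hm3sum : ∑ C : Finset Θ, m3 C = 1 := h3.2.2
  have hm1sum : ∑ B : Finset Θ, m1 B = 1 := h1.2.2
  have hK12 : (0:ℝ) < 1 - conflict m1 m2 := by linarith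
  have hK23 : (0:ℝ) < 1 - conflict m2 m3 := by linarith
  -- left numerator
  have numL : ∀ A : Finset Θ, A ≠ ∅ →
      (∑ B : Finset Θ, ∑ C : Finset Θ, if B ∩ C = A then dempster m1 m2 B * m3 C else 0)
      = tripleSum m1 m2 m3 A / (1 - conflict m1 m2) := by
    intro A hA
    have h : ∀ B C : Finset Θ, (if B ∩ C = A then dempster m1 m2 B * m3 C else 0)
        = (if B ∩ C = A then
            ((∑ X : Finset Θ, ∑ Y : Finset Θ, if X ∩ Y = B then m1 X * m2 Y else 0) * m3 C)
              / (1 - conflict m1 m2) else 0) := by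
      intro B C
      by_cases hB : B = ∅
      · subst hB
        simp [dempster, Ne.symm hA]
      · simp only [dempster, if_neg hB]
        split_ifs
        · ring
        · rfl
    simp_rw [h]
    exact dempster_sumdiv1 m1 m2 m3 A _
  -- right numerator
  have numR : ∀ A : Finset Θ, A ≠ ∅ →
      (∑ B : Finset Θ, ∑ C : Finset Θ, if B ∩ C = A then m1 B * dempster m2 m3 C else 0)
      = tripleSum m1 m2 m3 A / (1 - conflict m2 m3) := by
    intro A hA
    have h : ∀ B C : Finset Θ, (if B ∩ C = A then m1 B * dempster m2 m3 C else 0)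
        = (if B ∩ C = A then
            (m1 B * (∑ Y : Finset Θ, ∑ Z : Finset Θ, if Y ∩ Z = C then m2 Y * m3 Z else 0))
              / (1 - conflict m2 m3) else 0) := by
      intro B C
      by_cases hC : C = ∅
      · subst hC
        simp [dempster, Ne.symm hA]
      · simp only [dempster, if_neg hC]
        split_ifs
        · ring
        · rfl
    simp_rw [h]
    exact dempster_sumdiv2 m1 m2 m3 A _
  -- left conflict
  have confL : conflict (dempster m1 m2) m3
      = (tripleSum m1 m2 m3 ∅ - conflict m1 m2) / (1 - conflict m1 m2) := by
    have h : ∀ B C : Finset Θ, (if B ∩ C = ∅ then dempster m1 m2 B * m3 C else 0)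
        = (if B ∩ C = ∅ then
            ((∑ X : Finset Θ, ∑ Y : Finset Θ, if X ∩ Y = B then m1 X * m2 Y else 0) * m3 C)
              / (1 - conflict m1 m2) else 0)
          - (if B = ∅ then (conflict m1 m2 * m3 C) / (1 - conflict m1 m2) else 0) := by
      intro B C
      by_cases hB : B = ∅
      · subst hB
        have hS : (∑ X : Finset Θ, ∑ Y : Finset Θ,
            if X ∩ Y = (∅ : Finset Θ) then m1 X * m2 Y else 0) = conflict m1 m2 := rfl
        simp only [dempster, Finset.empty_inter, eq_self_iff_true, if_true, ite_true]
        rw [hS]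
        ring
      · simp only [dempster, if_neg hB]
        split_ifs
        · ring
        · ring
    rw [conflict]
    simp_rw [h, Finset.sum_sub_distrib]
    rw [dempster_sumdiv1]
    have e2 : (∑ B : Finset Θ, ∑ C : Finset Θ,
        if B = ∅ then (conflict m1 m2 * m3 C) / (1 - conflict m1 m2) else 0)
        = conflict m1 m2 / (1 - conflict m1 m2) := by
      rw [Finset.sum_comm]
      have : ∀ C : Finset Θ, (∑ B : Finset Θ,
          if B = ∅ then (conflict m1 m2 * m3 C) / (1 - conflict m1 m2) else 0)
          = (conflict m1 m2 * m3 C) / (1 - conflict m1 m2) := by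
        intro C
        rw [Finset.sum_ite_eq' Finset.univ (∅ : Finset Θ)
          (fun _ => (conflict m1 m2 * m3 C) / (1 - conflict m1 m2))]
        simp
      simp_rw [this, ← Finset.sum_div, ← Finset.mul_sum, hm3sum, mul_one]
    rw [e2]
    ring
  -- right conflict
  have confR : conflict m1 (dempster m2 m3)
      = (tripleSum m1 m2 m3 ∅ - conflict m2 m3) / (1 - conflict m2 m3) := by
    have h : ∀ B C : Finset Θ, (if B ∩ C = ∅ then m1 B * dempster m2 m3 C else 0)
        = (if B ∩ C = ∅ then
            (m1 B * (∑ Y : Finset Θ, ∑ Z : Finset Θ, if Y ∩ Z = C then m2 Y * m3 Z else 0))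
              / (1 - conflict m2 m3) else 0)
          - (if C = ∅ then (m1 B * conflict m2 m3) / (1 - conflict m2 m3) else 0) := by
      intro B C
      by_cases hC : C = ∅
      · subst hC
        have hS : (∑ Y : Finset Θ, ∑ Z : Finset Θ,
            if Y ∩ Z = (∅ : Finset Θ) then m2 Y * m3 Z else 0) = conflict m2 m3 := rfl
        simp only [dempster, Finset.inter_empty, eq_self_iff_true, if_true, ite_true]
        rw [hS]
        ring
      · simp only [dempster, if_neg hC]
        split_ifs
        · ring
        · ring
    rw [conflict]
    simp_rw [h, Finset.sum_sub_distrib]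
    rw [dempster_sumdiv2]
    have e2 : (∑ B : Finset Θ, ∑ C : Finset Θ,
        if C = ∅ then (m1 B * conflict m2 m3) / (1 - conflict m2 m3) else 0)
        = conflict m2 m3 / (1 - conflict m2 m3) := by
      have : ∀ B : Finset Θ, (∑ C : Finset Θ,
          if C = ∅ then (m1 B * conflict m2 m3) / (1 - conflict m2 m3) else 0)
          = (m1 B * conflict m2 m3) / (1 - conflict m2 m3) := by
        intro B
        rw [Finset.sum_ite_eq' Finset.univ (∅ : Finset Θ)
          (fun _ => (m1 B * conflict m2 m3) / (1 - conflict m2 m3))]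
        simp
      simp_rw [this, ← Finset.sum_div, ← Finset.sum_mul, hm1sum, one_mul]
    rw [e2]
    ring
  have hT1 : tripleSum m1 m2 m3 ∅ < 1 := by
    rw [confL, div_lt_one hK12] at hc12_3
    linarith
  have h1T : (0:ℝ) < 1 - tripleSum m1 m2 m3 ∅ := by linarith
  funext A
  by_cases hA : A = ∅
  · simp [dempster, hA]
  · have L1 : dempster (dempster m1 m2) m3 A
        = (∑ B : Finset Θ, ∑ C : Finset Θ, if B ∩ C = A then dempster m1 m2 B * m3 C else 0)
          / (1 - conflict (dempster m1 m2) m3) := by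
      rw [dempster, if_neg hA]
    have R1 : dempster m1 (dempster m2 m3) A
        = (∑ B : Finset Θ, ∑ C : Finset Θ, if B ∩ C = A then m1 B * dempster m2 m3 C else 0)
          / (1 - conflict m1 (dempster m2 m3)) := by
      rw [dempster, if_neg hA]
    rw [L1, R1, numL A hA, numR A hA, confL, confR]
    rw [show (1:ℝ) - (tripleSum m1 m2 m3 ∅ - conflict m1 m2) / (1 - conflict m1 m2)
        = (1 - tripleSum m1 m2 m3 ∅) / (1 - conflict m1 m2) by field_simp; ring]
    rw [show (1:ℝ) - (tripleSum m1 m2 m3 ∅ - conflict m2 m3) / (1 - conflict m2 m3)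
        = (1 - tripleSum m1 m2 m3 ∅) / (1 - conflict m2 m3) by field_simp; ring]
    rw [div_div_div_eq, div_div_div_eq]
    rw [mul_comm (1 - conflict m1 m2) (1 - tripleSum m1 m2 m3 ∅),
        mul_comm (1 - conflict m2 m3) (1 - tripleSum m1 m2 m3 ∅),
        mul_div_mul_right _ _ hK12.ne', mul_div_mul_right _ _ hK23.ne']
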